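/- For integers b > θ ≥ 2 and p ∈ (0,1), define W_p(q) := p + (1-p)·Bin(b,q,θ) - q where Bin(b,q,θ) = Σ_{k=θ}^{b} C(b,k) q^k (1-q)^{b-k}. Then there exists q̃ ∈ (0,1), independent of p, such that W_p is convex on [0,q̃] and concave on [q̃,1]. -/

import Mathlib

open Finset

-- auxiliary: the summand and its building blocks
private noncomputable def usum (b : ℕ) (q : ℝ) (j : ℕ) : ℝ :=
  ((b-1).choose j : ℝ) * q ^ j * (1 - q) ^ (b - 1 - j)

-- derivative of the Bin sum
lemma bin_hasDeriv (b θ : ℕ) (hθ : 2 ≤ θ) (hb : θ < b) (q : ℝ) :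
    HasDerivAt (fun q : ℝ => ∑ k ∈ Finset.Icc θ b, (b.choose k : ℝ) * q ^ k * (1 - q) ^ (b - k))
      ((b : ℝ) * usum b q (θ - 1)) q := by
  have key : ∀ k ∈ Finset.Icc θ b,
      HasDerivAt (fun q : ℝ => (b.choose k : ℝ) * q ^ k * (1 - q) ^ (b - k))
        ((b : ℝ) * usum b q (k - 1) - (b : ℝ) * usum b q k) q := by
    intro k hk
    rw [Finset.mem_Icc] at hk
    obtain ⟨hk1, hk2⟩ := hk
    have h1 : HasDerivAt (fun q : ℝ => q ^ k) ((k : ℝ) * q ^ (k - 1)) q := by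
      simpa using hasDerivAt_pow k q
    have h2 : HasDerivAt (fun q : ℝ => (1 - q) ^ (b - k))
        (((b - k : ℕ) : ℝ) * (1 - q) ^ (b - k - 1) * (-1)) q := by
      exact ((hasDerivAt_pow (b - k) (1 - q)).comp q
        (((hasDerivAt_id q).const_sub 1)))
    have h3 := ((h1.const_mul ((b.choose k : ℝ))).mul h2)
    convert h3 using 1
    · rfl
    · rfl
    · rfl
    have c1 : ((b.choose k : ℝ)) * (k : ℝ) = (b : ℝ) * ((b-1).choose (k-1) : ℝ) := by
      have : (b - 1).succ * (b-1).choose (k-1) = (b-1).succ.choose (k-1).succ * (k-1).succ :=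
        Nat.add_one_mul_choose_eq (b-1) (k-1)
      have hb1 : (b - 1).succ = b := by omega
      have hk1' : (k - 1).succ = k := by omega
      rw [hb1, hk1'] at this
      exact_mod_cast this.symm
    have c2 : ((b.choose k : ℝ)) * ((b - k : ℕ) : ℝ) = (b : ℝ) * ((b-1).choose k : ℝ) := by
      have h4 : b.choose (k + 1) * (k + 1) = b.choose k * (b - k) := Nat.choose_succ_right_eq b k
      have h5 : (b - 1).succ * (b-1).choose k = (b-1).succ.choose k.succ * k.succ :=
        Nat.add_one_mul_choose_eq (b-1) k
      have hb1 : (b - 1).succ = b := by omega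
      rw [hb1] at h5
      rw [Nat.succ_eq_add_one] at h5
      have : b.choose k * (b - k) = b * (b-1).choose k := by omega
      exact_mod_cast this
    unfold usum
    have e1 : b - 1 - (k - 1) = b - k := by omega
    have e2 : b - 1 - k = b - k - 1 := by omega
    rw [e1, e2]
    linear_combination (-(q ^ (k - 1) * (1 - q) ^ (b - k))) * c1 + q ^ k * (1 - q) ^ (b - k - 1) * c2
  have hsum := HasDerivAt.fun_sum key
  convert hsum using 1
  · rfl
  · rfl
  have : Finset.Icc θ b = Finset.Ico θ (b+1) := by rw [Finset.Ico_add_one_right_eq_Icc]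
  rw [this, Finset.sum_Ico_eq_sum_range]
  have tele : ∀ i, (fun k => (b : ℝ) * usum b q (k - 1) - (b : ℝ) * usum b q k) (θ + i)
      = (fun i => (b : ℝ) * usum b q (θ - 1 + i)) i - (fun i => (b : ℝ) * usum b q (θ - 1 + i)) (i+1) := by
    intro i
    have e1 : θ + i - 1 = θ - 1 + i := by omega
    have e2 : θ + i = θ - 1 + (i + 1) := by omega
    simp only
    rw [e1, e2]
  rw [Finset.sum_congr rfl (fun i _ => tele i), Finset.sum_range_sub']
  have hub : usum b q (θ - 1 + (b + 1 - θ)) = 0 := by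
    have : θ - 1 + (b + 1 - θ) = b := by omega
    rw [this]
    unfold usum
    rw [Nat.choose_eq_zero_of_lt (by omega)]
    simp
  rw [hub]
  simp

theorem convex_concave (b θ : ℕ) (hθ : 2 ≤ θ) (hb : θ < b) :
    ∃ qt ∈ Set.Ioo (0:ℝ) 1, ∀ p ∈ Set.Ioo (0:ℝ) 1,
      ConvexOn ℝ (Set.Icc (0:ℝ) qt)
        (fun q : ℝ => p + (1 - p) * (∑ k ∈ Finset.Icc θ b, (b.choose k : ℝ) * q ^ k * (1 - q) ^ (b - k)) - q) ∧
      ConcaveOn ℝ (Set.Icc qt 1)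
        (fun q : ℝ => p + (1 - p) * (∑ k ∈ Finset.Icc θ b, (b.choose k : ℝ) * q ^ k * (1 - q) ^ (b - k)) - q) := by
  set qt : ℝ := ((θ : ℝ) - 1) / ((b : ℝ) - 1) with hqt
  have hb1 : (1 : ℝ) < (b : ℝ) := by exact_mod_cast (by omega : 1 < b)
  have hbpos : (0 : ℝ) < (b : ℝ) - 1 := by linarith
  have hθ1 : (1 : ℝ) ≤ (θ : ℝ) - 1 := by
    have : (2 : ℝ) ≤ (θ : ℝ) := by exact_mod_cast hθ
    linarith
  have hθb : (θ : ℝ) - 1 < (b : ℝ) - 1 := by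
    have : (θ : ℝ) < (b : ℝ) := by exact_mod_cast hb
    linarith
  have hqt0 : 0 < qt := div_pos (by linarith) hbpos
  have hqt1 : qt < 1 := (div_lt_one hbpos).mpr hθb
  refine ⟨qt, ⟨hqt0, hqt1⟩, ?_⟩
  intro p hp
  set c : ℝ := (b : ℝ) * ((b-1).choose (θ-1) : ℝ) with hc
  have hcpos : 0 < c := by
    apply mul_pos (by positivity)
    exact_mod_cast Nat.choose_pos (by omega : θ - 1 ≤ b - 1)
  -- g is the derivative of Bin
  set g : ℝ → ℝ := fun q => c * (q ^ (θ - 1) * (1 - q) ^ (b - θ)) with hg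
  have hgder : ∀ q : ℝ,
      HasDerivAt (fun q : ℝ => ∑ k ∈ Finset.Icc θ b, (b.choose k : ℝ) * q ^ k * (1 - q) ^ (b - k))
        (g q) q := by
    intro q
    have := bin_hasDeriv b θ hθ hb q
    convert this using 1
    unfold usum
    rw [hg, hc]
    have : b - 1 - (θ - 1) = b - θ := by omega
    rw [this]; ring
  -- h is the derivative of g
  set h : ℝ → ℝ := fun q => c * (q ^ (θ - 2) * (1 - q) ^ (b - θ - 1) * (((θ:ℝ) - 1) - ((b:ℝ) - 1) * q)) with hh
  have hhder : ∀ q : ℝ, HasDerivAt g (h q) q := by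
    intro q
    have h1 : HasDerivAt (fun q : ℝ => q ^ (θ - 1)) (((θ - 1 : ℕ) : ℝ) * q ^ (θ - 1 - 1)) q :=
      hasDerivAt_pow (θ - 1) q
    have h2 : HasDerivAt (fun q : ℝ => (1 - q) ^ (b - θ))
        (((b - θ : ℕ) : ℝ) * (1 - q) ^ (b - θ - 1) * (-1)) q :=
      (hasDerivAt_pow (b - θ) (1 - q)).comp q ((hasDerivAt_id q).const_sub 1)
    have h3 := (h1.mul h2).const_mul c
    convert h3 using 1
    · rfl
    · rfl
    · rfl
    rw [hh]
    simp only
    have e1 : θ - 1 - 1 = θ - 2 := by omega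
    have e2 : ((θ - 1 : ℕ) : ℝ) = (θ : ℝ) - 1 := by
      push_cast [Nat.cast_sub (by omega : 1 ≤ θ)]; ring
    have e3 : ((b - θ : ℕ) : ℝ) = (b : ℝ) - (θ : ℝ) := by
      push_cast [Nat.cast_sub (by omega : θ ≤ b)]; ring
    have e4 : q ^ (θ - 1) = q ^ (θ - 2) * q := by
      rw [← pow_succ]; congr 1; omega
    have e5 : (1 - q) ^ (b - θ) = (1 - q) ^ (b - θ - 1) * (1 - q) := by
      rw [← pow_succ]; congr 1; omega
    rw [e1, e2, e3, e4, e5]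
    ring
  obtain ⟨hp0, hp1⟩ := hp
  have hp' : (0 : ℝ) < 1 - p := by linarith
  set f : ℝ → ℝ := fun q : ℝ => p + (1 - p) * (∑ k ∈ Finset.Icc θ b, (b.choose k : ℝ) * q ^ k * (1 - q) ^ (b - k)) - q with hf
  have hfder : ∀ q : ℝ, HasDerivAt f ((1 - p) * g q - 1) q := by
    intro q
    have := ((hgder q).const_mul (1 - p)).const_add p
    exact this.sub (hasDerivAt_id q)
  have hderiv_f : deriv f = fun q => (1 - p) * g q - 1 := funext fun q => (hfder q).deriv
  have hf2der : ∀ q : ℝ, HasDerivAt (deriv f) ((1 - p) * h q) q := by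
    intro q
    rw [hderiv_f]
    simpa using (((hhder q).const_mul (1 - p)).sub_const 1)
  have hderiv2 : ∀ q : ℝ, deriv^[2] f q = (1 - p) * h q := by
    intro q
    have : deriv (deriv f) q = (1 - p) * h q := (hf2der q).deriv
    simpa [Function.iterate_succ, Function.comp] using this
  have hdiff : DifferentiableOn ℝ f Set.univ := fun q _ => ((hfder q).differentiableAt).differentiableWithinAt
  have hdiff2 : DifferentiableOn ℝ (deriv f) Set.univ := fun q _ => ((hf2der q).differentiableAt).differentiableWithinAt
  constructor
  · apply convexOn_of_deriv2_nonneg' (convex_Icc 0 qt)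
      (hdiff.mono (Set.subset_univ _)) (hdiff2.mono (Set.subset_univ _))
    intro x hx
    rw [hderiv2]
    obtain ⟨hx0, hx1⟩ := hx
    have hx1' : x < 1 := lt_of_le_of_lt hx1 hqt1
    apply mul_nonneg (le_of_lt hp')
    rw [hh]
    apply mul_nonneg (le_of_lt hcpos)
    apply mul_nonneg (mul_nonneg (pow_nonneg hx0 _) (pow_nonneg (by linarith) _))
    have : ((b:ℝ) - 1) * x ≤ (θ:ℝ) - 1 := by
      calc ((b:ℝ) - 1) * x ≤ ((b:ℝ) - 1) * qt := by nlinarith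
        _ = (θ:ℝ) - 1 := by rw [hqt]; field_simp
    linarith
  · apply concaveOn_of_deriv2_nonpos' (convex_Icc qt 1)
      (hdiff.mono (Set.subset_univ _)) (hdiff2.mono (Set.subset_univ _))
    intro x hx
    rw [hderiv2]
    obtain ⟨hx0, hx1⟩ := hx
    have hx0' : 0 < x := lt_of_lt_of_le hqt0 hx0
    apply mul_nonpos_of_nonneg_of_nonpos (le_of_lt hp')
    rw [hh]
    apply mul_nonpos_of_nonneg_of_nonpos (le_of_lt hcpos)
    apply mul_nonpos_of_nonneg_of_nonpos
      (mul_nonneg (pow_nonneg (le_of_lt hx0') _) (pow_nonneg (by linarith) _))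
    have : (θ:ℝ) - 1 ≤ ((b:ℝ) - 1) * x := by
      calc (θ:ℝ) - 1 = ((b:ℝ) - 1) * qt := by rw [hqt]; field_simp
        _ ≤ ((b:ℝ) - 1) * x := by nlinarith
    linarith
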